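/- arXiv:2312.08129 — 5 statements merged into one kernel-verified Lean document; each statement's English description precedes it below -/
import Mathlib

section
/- Let k ∈ ℕ and let S ⊆ ℤ be piecewise syndetic. Then the set {(a,d) ∈ ℤ × ℤ : {a, a+d, a+2d, ..., a+kd} ⊆ S} is piecewise syndetic in the semigroup ℤ × ℤ (with coordinatewise addition). -/
/-- `A` is thick in `(G,+)`: every finite set admits a translate inside `A`. -/
def IsThick {G : Type*} [Add G] (A : Set G) : Prop :=
  ∀ E : Finset G, ∃ g : G, ∀ e ∈ E, e + g ∈ A

/-- `A` is piecewise syndetic in `(G,+)`: there is a finite set `F` such that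
`⋃_{x ∈ F} (-x + A)` is thick, where `-x + A = {y | x + y ∈ A}`. -/
def IsPiecewiseSyndetic {G : Type*} [Add G] (A : Set G) : Prop :=
  ∃ F : Finset G, IsThick {y : G | ∃ x ∈ F, x + y ∈ A}

open Filter Set

attribute [local instance] Ultrafilter.add Ultrafilter.addSemigroup

namespace APAbundance

variable {G : Type*} [AddSemigroup G]

theorem mem_add {s : Set G} {U V : Ultrafilter G} :
    s ∈ U + V ↔ {m : G | {m' : G | m + m' ∈ s} ∈ V} ∈ U := Iff.rfl

/-- closed left ideals of `β G` -/
def IsLI (I : Set (Ultrafilter G)) : Prop :=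
  I.Nonempty ∧ IsClosed I ∧ ∀ p : Ultrafilter G, ∀ q ∈ I, p + q ∈ I

theorem isLI_range_add (r : Ultrafilter G) : IsLI (Set.range (· + r)) := by
  refine ⟨⟨r + r, r, rfl⟩, (isCompact_range (Ultrafilter.continuous_add_left r)).isClosed, ?_⟩
  rintro p q ⟨u, rfl⟩
  exact ⟨p + u, by dsimp only; rw [add_assoc]⟩

theorem exists_minimal_LI (I : Set (Ultrafilter G)) (hI : IsLI I) :
    ∃ M, M ⊆ I ∧ IsLI M ∧ ∀ J ⊆ M, IsLI J → J = M := by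
  have Hc : ∀ c ⊆ {J : Set (Ultrafilter G) | IsLI J}, IsChain (· ⊆ ·) c → c.Nonempty →
      ∃ lb ∈ {J : Set (Ultrafilter G) | IsLI J}, ∀ s ∈ c, lb ⊆ s := by
    intro c hcS hchain hcne
    haveI : Nonempty c := hcne.to_subtype
    refine ⟨⋂₀ c, ⟨?_, isClosed_sInter fun U hU => (hcS hU).2.1, ?_⟩, fun s hs => sInter_subset_of_mem hs⟩
    · have hdir : DirectedOn (· ⊇ ·) c := by
        intro U hU V hV
        rcases hchain.total hU hV with h | h
        · exact ⟨U, hU, Set.Subset.rfl, h⟩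
        · exact ⟨V, hV, h, Set.Subset.rfl⟩
      exact IsCompact.nonempty_sInter_of_directed_nonempty_isCompact_isClosed
        hdir (fun U hU => (hcS hU).1)
        (fun U hU => (hcS hU).2.1.isCompact) (fun U hU => (hcS hU).2.1)
    · intro p q hq
      exact fun U hU => (hcS hU).2.2 p q (hq U hU)
  obtain ⟨M, hMI, hM⟩ := zorn_superset_nonempty {J | IsLI J} Hc I hI
  exact ⟨M, hMI, hM.1, fun J hJM hJ => subset_antisymm hJM (hM.2 hJ hJM)⟩

theorem mem_range_add {M : Set (Ultrafilter G)} (hM : IsLI M)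
    (hmin : ∀ J ⊆ M, IsLI J → J = M) {r : Ultrafilter G} (hr : r ∈ M)
    {x : Ultrafilter G} (hx : x ∈ M) : ∃ u : Ultrafilter G, u + r = x := by
  have hsub : Set.range (· + r) ⊆ M := by rintro _ ⟨u, rfl⟩; exact hM.2.2 u r hr
  have := hmin _ hsub (isLI_range_add r)
  rw [← this] at hx
  exact hx

theorem add_idem_of_min {M : Set (Ultrafilter G)} (hM : IsLI M)
    (hmin : ∀ J ⊆ M, IsLI J → J = M) {e x : Ultrafilter G} (he : e ∈ M)
    (hee : e + e = e) (hx : x ∈ M) : x + e = x := by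
  obtain ⟨u, hu⟩ := mem_range_add hM hmin he hx
  rw [← hu, add_assoc, hee]

/-- Step A : a piecewise syndetic set belongs to an ultrafilter lying in a
minimal closed left ideal. -/
theorem exists_min_ultrafilter_of_PS [Nonempty G] {S : Set G} (hS : IsPiecewiseSyndetic S) :
    ∃ (M : Set (Ultrafilter G)) (p : Ultrafilter G),
      IsLI M ∧ (∀ J ⊆ M, IsLI J → J = M) ∧ p ∈ M ∧ S ∈ p := by
  classical
  obtain ⟨F, hT⟩ := hS
  set T : Set G := {y | ∃ x ∈ F, x + y ∈ S} with hTdef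
  obtain ⟨p₀, hp₀⟩ :
      ∃ p₀ : Ultrafilter G, ∀ g : G, {y | g + y ∈ T} ∈ p₀ := by
    have cond : ∀ Tf : Finset (Set G), (↑Tf : Set (Set G)) ⊆
        (Set.range fun g : G => {y | g + y ∈ T}) → (⋂₀ (↑Tf : Set (Set G))).Nonempty := by
      intro Tf hTf
      have h1 : ∀ c ∈ (Tf : Set (Set G)), ∃ g : G, {y | g + y ∈ T} = c := fun c hc => hTf hc
      choose! gg hgg using h1
      obtain ⟨y0, hy0⟩ := hT (Tf.image gg)
      refine ⟨y0, Set.mem_sInter.2 fun c hc => ?_⟩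
      rw [← hgg c hc]
      exact hy0 (gg c) (Finset.mem_image_of_mem gg (by exact_mod_cast hc))
    obtain ⟨p₀, hp₀⟩ := Ultrafilter.exists_ultrafilter_of_finite_inter_nonempty _ cond
    exact ⟨p₀, fun g => hp₀ ⟨g, rfl⟩⟩
  obtain ⟨M, hML, hM, hmin⟩ := exists_minimal_LI _ (isLI_range_add p₀)
  obtain ⟨r₀, hr₀⟩ := hM.1
  have hTr₀ : T ∈ r₀ := by
    obtain ⟨q, rfl⟩ := hML hr₀
    rw [mem_add]
    have : {m : G | {m' | m + m' ∈ T} ∈ p₀} = Set.univ := by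
      ext m; simp [hp₀ m]
    rw [this]
    exact Filter.univ_mem
  have hUn : (⋃ x ∈ (F : Set G), {y | x + y ∈ S}) ∈ r₀ := by
    have : (⋃ x ∈ (F : Set G), {y : G | x + y ∈ S}) = T := by
      ext y; simp [hTdef]
    rwa [this]
  obtain ⟨x, hxF, hxS⟩ := (Ultrafilter.finite_biUnion_mem_iff F.finite_toSet).mp hUn
  refine ⟨M, pure x + r₀, hM, hmin, hM.2.2 _ _ hr₀, ?_⟩
  rw [mem_add]
  exact hxS

/-- Step B : a member of an ultrafilter lying in a minimal closed left
ideal is piecewise syndetic. -/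
theorem PS_of_min [Nonempty G] {S : Set G} {M : Set (Ultrafilter G)} {p : Ultrafilter G}
    (hM : IsLI M) (hmin : ∀ J ⊆ M, IsLI J → J = M)
    (hp : p ∈ M) (hSp : S ∈ p) : IsPiecewiseSyndetic S := by
  classical
  have key : ∀ r ∈ M, ∃ tr : G, {y | tr + y ∈ S} ∈ r := by
    intro r hr
    obtain ⟨u, hu⟩ := mem_range_add hM hmin hr hp
    have hmem : {m : G | {m' | m + m' ∈ S} ∈ r} ∈ u := mem_add.mp (hu ▸ hSp)
    obtain ⟨tr, htr⟩ := Ultrafilter.nonempty_of_mem hmem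
    exact ⟨tr, htr⟩
  choose! t ht using key
  have hMc : IsCompact M := hM.2.1.isCompact
  obtain ⟨Fi, hFi⟩ := hMc.elim_finite_subcover
    (fun r : Ultrafilter G => {q : Ultrafilter G | {y | t r + y ∈ S} ∈ q})
    (fun r => ultrafilter_isOpen_basic _)
    (fun r hr => Set.mem_iUnion.2 ⟨r, ht r hr⟩)
  refine ⟨Fi.image t, ?_⟩
  set TF : Set G := {y | ∃ x ∈ Fi.image t, x + y ∈ S} with hTFdef
  have claim : ∀ g : G, {y | g + y ∈ TF} ∈ p := by
    intro g
    have hgp : pure g + p ∈ M := hM.2.2 (pure g) p hp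
    obtain ⟨r, hrFi, hrmem⟩ := by
      have := hFi hgp
      simpa using this
    have h2 : {m' : G | t r + (g + m') ∈ S} ∈ p := by
      have := mem_add.mp hrmem
      rwa [Ultrafilter.mem_pure] at this
    exact Filter.mem_of_superset h2 fun y hy => ⟨t r, Finset.mem_image_of_mem t hrFi, hy⟩
  intro E
  have hmemE : (⋂ e ∈ (E : Set G), {y | e + y ∈ TF}) ∈ p :=
    (Filter.biInter_mem E.finite_toSet).mpr fun e _ => claim e
  obtain ⟨y, hy⟩ := Ultrafilter.nonempty_of_mem hmemE
  exact ⟨y, fun e he => by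
    have := Set.mem_iInter₂.mp hy e he
    exact this⟩

theorem map_add_hom {H : Type*} [AddSemigroup H] (ψ : G → H)
    (hψ : ∀ a b : G, ψ (a + b) = ψ a + ψ b) (U V : Ultrafilter G) :
    (U + V).map ψ = U.map ψ + V.map ψ := by
  apply Ultrafilter.coe_inj.mp
  apply Filter.ext
  intro s
  simp only [Ultrafilter.mem_coe, Ultrafilter.mem_map, mem_add, Set.preimage_setOf_eq,
    Set.mem_setOf_eq, Set.mem_preimage]
  have hset : ∀ m : G, {m' | ψ (m + m') ∈ s} = {m' | ψ m + ψ m' ∈ s} := by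
    intro m; ext m'; simp [hψ]
  simp only [hset]

theorem continuous_ultramap {H : Type*} (ψ : G → H) :
    Continuous (Ultrafilter.map ψ) :=
  ultrafilterBasis_is_basis.continuous_iff.2 <| Set.forall_mem_range.mpr fun s =>
    ultrafilter_isOpen_basic (ψ ⁻¹' s)

end APAbundance

/-- If `S ⊆ ℤ` is piecewise syndetic, then for every `k ∈ ℕ` the set
`{(a, d) : {a, a + d, a + 2d, …, a + kd} ⊆ S}` is piecewise syndetic in `ℤ × ℤ`. -/
theorem abundance_of_AP_in_piecewise_syndetic (k : ℕ) (S : Set ℤ)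
    (hS : IsPiecewiseSyndetic S) :
    IsPiecewiseSyndetic {p : ℤ × ℤ | ∀ i : ℕ, i ≤ k → p.1 + (i : ℤ) * p.2 ∈ S} := by
  classical
  obtain ⟨M, p, hM, hmin, hpM, hSp⟩ := APAbundance.exists_min_ultrafilter_of_PS hS
  set ψ : ℕ → ℤ × ℤ → ℤ := fun i q => q.1 + (i : ℤ) * q.2 with hψdef
  have hψhom : ∀ i : ℕ, ∀ a b : ℤ × ℤ, ψ i (a + b) = ψ i a + ψ i b := by
    intro i a b
    simp only [ψ, Prod.fst_add, Prod.snd_add]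
    ring
  set N : Set (Ultrafilter (ℤ × ℤ)) := {w | ∀ i : ℕ, i ≤ k → w.map (ψ i) ∈ M} with hNdef
  have hu₀ : Ultrafilter.map (fun a : ℤ => ((a, 0) : ℤ × ℤ)) p ∈ N := by
    intro i hi
    rw [Ultrafilter.map_map]
    have : (ψ i ∘ fun a : ℤ => ((a, 0) : ℤ × ℤ)) = id := by
      funext a; simp [ψ]
    rw [this, Ultrafilter.map_id]
    exact hpM
  have hNLI : APAbundance.IsLI N := by
    refine ⟨⟨_, hu₀⟩, ?_, ?_⟩
    · have : N = ⋂ (i : ℕ) (_ : i ≤ k), (Ultrafilter.map (ψ i)) ⁻¹' M := by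
        ext w; simp [hNdef]
      rw [this]
      exact isClosed_iInter fun i => isClosed_iInter fun _ =>
        hM.2.1.preimage (APAbundance.continuous_ultramap _)
    · intro v w hw i hi
      rw [APAbundance.map_add_hom (ψ i) (hψhom i)]
      exact hM.2.2 _ _ (hw i hi)
  obtain ⟨M₂, hM₂N, hM₂, hmin₂⟩ := APAbundance.exists_minimal_LI N hNLI
  obtain ⟨e, heM₂, hee⟩ := exists_idempotent_in_compact_add_subsemigroup
    (fun r => Ultrafilter.continuous_add_left r) M₂ hM₂.1 hM₂.2.1.isCompact
    (fun x hx y hy => hM₂.2.2 x y hy)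
  set w : Ultrafilter (ℤ × ℤ) := Ultrafilter.map (fun a : ℤ => ((a, 0) : ℤ × ℤ)) p + e with hwdef
  have hwM₂ : w ∈ M₂ := hM₂.2.2 _ _ heM₂
  have hmapw : ∀ i : ℕ, i ≤ k → w.map (ψ i) = p := by
    intro i hi
    rw [hwdef, APAbundance.map_add_hom (ψ i) (hψhom i), Ultrafilter.map_map]
    have h1 : (ψ i ∘ fun a : ℤ => ((a, 0) : ℤ × ℤ)) = id := by
      funext a; simp [ψ]
    rw [h1, Ultrafilter.map_id]
    have heiM : e.map (ψ i) ∈ M := hM₂N heM₂ i hi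
    have heidem : e.map (ψ i) + e.map (ψ i) = e.map (ψ i) := by
      rw [← APAbundance.map_add_hom (ψ i) (hψhom i), hee]
    exact APAbundance.add_idem_of_min hM hmin heiM heidem hpM
  have hA : {q : ℤ × ℤ | ∀ i : ℕ, i ≤ k → ψ i q ∈ S} ∈ w := by
    have heq : {q : ℤ × ℤ | ∀ i : ℕ, i ≤ k → ψ i q ∈ S}
        = ⋂ i ∈ Set.Iic k, (ψ i) ⁻¹' S := by
      ext q; simp [Set.mem_Iic]
    rw [heq, ← Ultrafilter.mem_coe]
    rw [Filter.biInter_mem (Set.finite_Iic k)]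
    intro i hi
    have : S ∈ w.map (ψ i) := (hmapw i hi) ▸ hSp
    exact this
  exact APAbundance.PS_of_min hM₂ hmin₂ hwM₂ hA
end

section
/- Let (S,+) be a commutative semigroup, let A ⊆ S be a CR-set in S, and let l ∈ ℕ. Then the set C = {(a,d) ∈ S × S : {a, a+d, a+2d, ..., a+ld} ⊆ A} is a CR-set in the commutative semigroup S × S (with coordinatewise addition). -/
instance addStdCommutative {S : Type*} [AddCommSemigroup S] :
    Std.Commutative (α := S) (· + ·) := ⟨add_comm⟩

instance addStdAssociative {S : Type*} [AddSemigroup S] :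
    Std.Associative (α := S) (· + ·) := ⟨add_assoc⟩

/-- `A` is a CR-set in the commutative semigroup `(S, +)`: for each `k ∈ ℕ` there exists
`r ∈ ℕ` such that for every family `F` of at most `k` sequences in `S`, there exist `a ∈ S`
and a nonempty finite `H ⊆ ℕ` with `max H ≤ r` such that `a + Σ_{t ∈ H} f(t) ∈ A` for all
`f ∈ F`.  Here `a + Σ_{t ∈ H} f(t)` is expressed as `H.fold (· + ·) a f`. -/
def IsAddCRSet {S : Type*} [AddCommSemigroup S] (A : Set S) : Prop :=
  ∀ k : ℕ, ∃ r : ℕ, ∀ F : Finset (ℕ → S), F.card ≤ k →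
    ∃ a : S, ∃ H : Finset ℕ, H.Nonempty ∧ (∀ t ∈ H, t ≤ r) ∧
      ∀ f ∈ F, (H.fold (· + ·) a f : S) ∈ A

/-- `(j+1)` summands: `nsmulSucc j d = d + d + ⋯ + d` with `j + 1` copies of `d`. -/
def nsmulSucc {S : Type*} [AddSemigroup S] : ℕ → S → S
  | 0, d => d
  | n + 1, d => nsmulSucc n d + d

lemma nsmulSucc_add {S : Type*} [AddCommSemigroup S] (j : ℕ) (x y : S) :
    nsmulSucc j (x + y) = nsmulSucc j x + nsmulSucc j y := by
  induction j with
  | zero => rfl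
  | succ n ih =>
      show nsmulSucc n (x + y) + (x + y) = nsmulSucc n x + x + (nsmulSucc n y + y)
      rw [ih, add_add_add_comm]

lemma fold_add_left {S : Type*} [AddCommSemigroup S] (s : Finset ℕ) (x y : S) (g : ℕ → S) :
    (s.fold (· + ·) (x + y) g : S) = x + (s.fold (· + ·) y g : S) := by
  classical
  induction s using Finset.induction with
  | empty => simp
  | insert _ _ h ih =>
      rw [Finset.fold_insert h, Finset.fold_insert h, ih, add_left_comm]

lemma fold_add_distrib {S : Type*} [AddCommSemigroup S] (s : Finset ℕ) (x y : S)
    (g h : ℕ → S) :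
    (s.fold (· + ·) (x + y) (fun t => g t + h t) : S)
      = (s.fold (· + ·) x g : S) + (s.fold (· + ·) y h : S) := by
  classical
  induction s using Finset.induction with
  | empty => simp
  | insert _ _ hmem ih =>
      rw [Finset.fold_insert hmem, Finset.fold_insert hmem, Finset.fold_insert hmem, ih,
        add_add_add_comm]

/-- If `A` is a CR-set in a commutative semigroup `(S, +)` and `l ∈ ℕ`, then
`C = {(a, d) : {a, a + d, a + 2d, …, a + ld} ⊆ A}` is a CR-set in `S × S`. -/
theorem abundance_of_AP_in_CR_commutative {S : Type*} [AddCommSemigroup S] (A : Set S)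
    (hA : IsAddCRSet A) (l : ℕ) :
    IsAddCRSet {q : S × S | q.1 ∈ A ∧ ∀ j : ℕ, j < l → q.1 + nsmulSucc j q.2 ∈ A} := by
  classical
  intro k
  obtain ⟨r₀, hr₀⟩ := hA 0
  obtain ⟨c, -, -, -⟩ := hr₀ ∅ (by simp)
  obtain ⟨r, hr⟩ := hA (k * (l + 1))
  refine ⟨r, ?_⟩
  intro F hF
  set Q : (ℕ → S × S) → ℕ → (ℕ → S) := fun f j =>
    match j with
    | 0 => fun t => (f t).1
    | j + 1 => fun t => (f t).1 + nsmulSucc j (c + (f t).2) with hQ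
  set F' : Finset (ℕ → S) := F.biUnion (fun f => (Finset.range (l + 1)).image (Q f)) with hF'
  have hcard : F'.card ≤ k * (l + 1) := by
    calc F'.card ≤ ∑ f ∈ F, ((Finset.range (l + 1)).image (Q f)).card :=
          Finset.card_biUnion_le
      _ ≤ ∑ _f ∈ F, (l + 1) :=
          Finset.sum_le_sum (fun f _ => (Finset.card_image_le).trans (by simp))
      _ = F.card * (l + 1) := by rw [Finset.sum_const, smul_eq_mul]
      _ ≤ k * (l + 1) := Nat.mul_le_mul_right _ hF
  obtain ⟨b, H, hne, hbd, hmem⟩ := hr F' hcard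
  have hh₀ : H.min' hne ∈ H := H.min'_mem hne
  set h₀ := H.min' hne
  set H' := H.erase h₀ with hH'
  set Sum : (ℕ → S) → S := fun g => H'.fold (· + ·) (g h₀) g with hSum
  have key : ∀ (a : S) (g : ℕ → S), (H.fold (· + ·) a g : S) = a + Sum g := by
    intro a g
    conv_lhs => rw [← Finset.insert_erase hh₀]
    rw [Finset.fold_insert (Finset.notMem_erase _ _)]
    show g h₀ + (H'.fold (· + ·) a g : S) = a + Sum g
    rw [← fold_add_left H' (g h₀) a g, add_comm (g h₀) a, fold_add_left]
  have sum_add : ∀ g h : ℕ → S,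
      Sum (fun t => g t + h t) = Sum g + Sum h := by
    intro g h
    exact fold_add_distrib H' (g h₀) (h h₀) g h
  have sum_nsmul : ∀ (j : ℕ) (g : ℕ → S),
      nsmulSucc j (Sum g) = Sum (fun t => nsmulSucc j (g t)) := by
    intro j g
    exact (Finset.fold_hom (fun x y => nsmulSucc_add j x y)).symm
  have hQmem : ∀ f ∈ F, ∀ j ≤ l, Q f j ∈ F' := by
    intro f hf j hj
    rw [hF']
    exact Finset.mem_biUnion.2 ⟨f, hf,
      Finset.mem_image.2 ⟨j, Finset.mem_range.2 (Nat.lt_succ_of_le hj), rfl⟩⟩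
  refine ⟨(b, Sum (fun _ => c)), H, hne, hbd, ?_⟩
  intro f hf
  simp only [Set.mem_setOf_eq]
  have hfst : ((H.fold (· + ·) ((b, Sum (fun _ => c))) f : S × S)).1
      = (H.fold (· + ·) b (fun t => (f t).1) : S) :=
    (Finset.fold_hom (fun x y : S × S => Prod.fst_add x y)).symm
  have hsnd : ((H.fold (· + ·) ((b, Sum (fun _ => c))) f : S × S)).2
      = (H.fold (· + ·) (Sum (fun _ => c)) (fun t => (f t).2) : S) :=
    (Finset.fold_hom (fun x y : S × S => Prod.snd_add x y)).symm
  constructor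
  · rw [hfst]
    exact hmem _ (hQmem f hf 0 (Nat.zero_le l))
  · intro j hj
    rw [hfst, hsnd]
    have h2 : (H.fold (· + ·) (Sum (fun _ => c)) (fun t => (f t).2) : S)
        = Sum (fun t => c + (f t).2) := by
      rw [key]
      exact (sum_add _ _).symm
    have main : (b : S) + Sum (fun t => (f t).1 + nsmulSucc j (c + (f t).2)) ∈ A := by
      have h := hmem _ (hQmem f hf (j + 1) hj)
      rw [key] at h
      exact h
    have e1 : nsmulSucc j (Sum (fun t => c + (f t).2))
        = Sum (fun t => nsmulSucc j (c + (f t).2)) := sum_nsmul j _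
    have e2 : Sum (fun t => (f t).1 + nsmulSucc j (c + (f t).2))
        = Sum (fun t => (f t).1) + Sum (fun t => nsmulSucc j (c + (f t).2)) := sum_add _ _
    rw [e2] at main
    rw [h2, e1, key, add_assoc]
    exact main
end

section
/- Let (S,·) be a semigroup and let k ∈ ℕ. Then k-SCR(S) = {p ∈ βS : every A ∈ p is a k-SCR-set in S} is a two-sided ideal of the semigroup (βS,·); that is, for all p ∈ k-SCR(S) and q ∈ βS, both p·q ∈ k-SCR(S) and q·p ∈ k-SCR(S). -/
/-- `A` is a `k`-SCR-set in the semigroup `S`: there exists `r ∈ ℕ` such that for every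
family `F` of at most `k` sequences in `S`, there exist `a₁, a₂ ∈ S` and `t ≤ r` with
`a₁ f(t) a₂ ∈ A` for every `f ∈ F`. -/
def IskSCRSet {S : Type*} [Semigroup S] (k : ℕ) (A : Set S) : Prop :=
  ∃ r : ℕ, ∀ F : Finset (ℕ → S), F.card ≤ k →
    ∃ a₁ a₂ : S, ∃ t ≤ r, ∀ f ∈ F, a₁ * f t * a₂ ∈ A

/- The semigroup structure on `βS = Ultrafilter S` given by
`A ∈ p * q ↔ {x | {y | x * y ∈ A} ∈ q} ∈ p`. -/
attribute [local instance] Ultrafilter.semigroup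

/-- `k-SCR(S) = {p ∈ βS : every A ∈ p is a k-SCR-set}` is a two-sided ideal of `(βS, ·)`:
for all `p ∈ k-SCR(S)` and `q ∈ βS`, both `p * q ∈ k-SCR(S)` and `q * p ∈ k-SCR(S)`. -/
theorem kSCR_ultrafilters_two_sided_ideal {S : Type*} [Semigroup S] (k : ℕ)
    (p : Ultrafilter S) (hp : ∀ A ∈ p, IskSCRSet k A) (q : Ultrafilter S) :
    (∀ A ∈ p * q, IskSCRSet k A) ∧ (∀ A ∈ q * p, IskSCRSet k A) := by
  constructor
  · intro A hA
    have h : ∀ᶠ m in ↑p, ∀ᶠ m' in ↑q, m * m' ∈ A :=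
      (Ultrafilter.eventually_mul p q (· ∈ A)).mp hA
    obtain ⟨r, hr⟩ := hp _ h
    refine ⟨r, fun F hF => ?_⟩
    obtain ⟨a₁, a₂, t, ht, hmem⟩ := hr F hF
    have hq : ∀ᶠ y in ↑q, ∀ f ∈ F, a₁ * f t * a₂ * y ∈ A := by
      rw [Filter.eventually_all_finset]
      exact fun f hf => hmem f hf
    obtain ⟨y, hy⟩ := hq.exists
    exact ⟨a₁, a₂ * y, t, ht, fun f hf => by
      have := hy f hf; rwa [mul_assoc (a₁ * f t)] at this⟩
  · intro A hA
    have h : ∀ᶠ m in ↑q, ∀ᶠ m' in ↑p, m * m' ∈ A :=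
      (Ultrafilter.eventually_mul q p (· ∈ A)).mp hA
    obtain ⟨x, hx⟩ := h.exists
    obtain ⟨r, hr⟩ := hp _ hx
    refine ⟨r, fun F hF => ?_⟩
    obtain ⟨a₁, a₂, t, ht, hmem⟩ := hr F hF
    exact ⟨x * a₁, a₂, t, ht, fun f hf => by
      have := hmem f hf; simpa [mul_assoc] using this⟩
end

section
/- Let (S,·) be an arbitrary semigroup and let A ⊆ S be a SCR-set in S. Then the set D = {(a₁,a₂,d) ∈ S × S × S : a₁·d·a₂ ∈ A and a₁·d·d·a₂ ∈ A} is a SCR-set in the semigroup S × S × S (with coordinatewise multiplication). -/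
/-- `A` is a strong combinatorially rich set (SCR-set) in the semigroup `S`. -/
def IsSCRSet {S : Type*} [Semigroup S] (A : Set S) : Prop :=
  ∀ k : ℕ, ∃ r : ℕ, ∀ F : Finset (ℕ → S), F.card ≤ k →
    ∃ a₁ a₂ : S, ∃ t ≤ r, ∀ f ∈ F, a₁ * f t * a₂ ∈ A

/-- If `A` is a SCR-set in a semigroup `S`, then
`D = {(a₁, a₂, d) : a₁ d a₂ ∈ A and a₁ d d a₂ ∈ A}` is a SCR-set in `S × S × S`. -/
theorem abundance_of_progressions_in_SCR_strong {S : Type*} [Semigroup S] (A : Set S)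
    (hA : IsSCRSet A) :
    IsSCRSet {x : S × S × S | x.1 * x.2.2 * x.2.1 ∈ A ∧ x.1 * x.2.2 * x.2.2 * x.2.1 ∈ A} := by
  classical
  intro k
  obtain ⟨r₀, h₀⟩ := hA 0
  obtain ⟨c, -, -⟩ := h₀ ∅ (by simp)
  obtain ⟨r, hr⟩ := hA (2 * k)
  refine ⟨r, ?_⟩
  intro F hF
  set g : (ℕ → S × S × S) → (ℕ → S) := fun f t =>
    (f t).1 * c * c * (f t).2.2 * c * c * (f t).2.1 with hg
  set h : (ℕ → S × S × S) → (ℕ → S) := fun f t =>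
    (f t).1 * c * c * (f t).2.2 * c * c * (f t).2.2 * c * c * (f t).2.1 with hh
  have hcard : (F.image g ∪ F.image h).card ≤ 2 * k := by
    calc (F.image g ∪ F.image h).card ≤ (F.image g).card + (F.image h).card :=
          Finset.card_union_le _ _
      _ ≤ F.card + F.card := add_le_add Finset.card_image_le Finset.card_image_le
      _ ≤ 2 * k := by omega
  obtain ⟨a₁, a₂, t, ht, hmem⟩ := hr _ hcard
  refine ⟨(a₁, c, c), (c, a₂, c), t, ht, ?_⟩
  intro f hf
  have h1 := hmem (g f) (Finset.mem_union_left _ (Finset.mem_image_of_mem _ hf))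
  have h2 := hmem (h f) (Finset.mem_union_right _ (Finset.mem_image_of_mem _ hf))
  simp only [hg, hh] at h1 h2
  constructor
  · show _ * _ * _ ∈ A
    simp only [Prod.fst_mul, Prod.snd_mul]
    simpa [mul_assoc] using h1
  · show _ * _ * _ * _ ∈ A
    simp only [Prod.fst_mul, Prod.snd_mul]
    simpa [mul_assoc] using h2
end

section
/- Let (S,·) be an arbitrary semigroup and let A ⊆ S be a SCR-set in S. Then the set D = {(a₁,a₂,d) ∈ S × S × S : a₁·d·a₂ ∈ A and a₁·d·d·a₂ ∈ A} is a CR-set in the semigroup S × S × S (with coordinatewise multiplication). -/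
/-- `A` is a combinatorially rich set (CR-set) in the semigroup `S`. -/
def IsCRSet {S : Type*} [Semigroup S] (A : Set S) : Prop :=
  ∀ k : ℕ, ∃ r m : ℕ, 0 < m ∧
    ∀ F : Finset (ℕ → S), F.card ≤ k →
      ∃ a : Fin (m + 1) → S, ∃ t : Fin m → ℕ, StrictMono t ∧ (∀ i, t i ≤ r) ∧
        ∀ f ∈ F,
          (List.ofFn fun i : Fin m => a i.castSucc * f (t i)).foldr (· * ·) (a (Fin.last m)) ∈ A

/-- If `A` is a SCR-set in a semigroup `S`, then
`D = {(a₁, a₂, d) : a₁ d a₂ ∈ A and a₁ d d a₂ ∈ A}` is a CR-set in `S × S × S`. -/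
theorem abundance_of_progressions_in_SCR {S : Type*} [Semigroup S] (A : Set S)
    (hA : IsSCRSet A) :
    IsCRSet {x : S × S × S | x.1 * x.2.2 * x.2.1 ∈ A ∧ x.1 * x.2.2 * x.2.2 * x.2.1 ∈ A} := by
  classical
  intro k
  -- get some element s of S from the SCR property
  obtain ⟨r₀, h₀⟩ := hA 0
  obtain ⟨s, -, -⟩ := h₀ ∅ (by simp)
  obtain ⟨r, hr⟩ := hA (k + k)
  refine ⟨r, 1, one_pos, ?_⟩
  intro F hF
  set g : (ℕ → S × S × S) → (ℕ → S) :=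
    fun f t => (f t).1 * s * s * (f t).2.2 * s * s * (f t).2.1 with hg
  set h : (ℕ → S × S × S) → (ℕ → S) :=
    fun f t => (f t).1 * s * s * (f t).2.2 * s * s * (f t).2.2 * s * s * (f t).2.1 with hh
  obtain ⟨u₁, u₂, t, ht, hu⟩ := hr (F.image g ∪ F.image h) (by
    calc (F.image g ∪ F.image h).card ≤ (F.image g).card + (F.image h).card :=
          Finset.card_union_le _ _
      _ ≤ k + k := Nat.add_le_add (le_trans (Finset.card_image_le) hF)
          (le_trans (Finset.card_image_le) hF))
  refine ⟨![(u₁, s, s), (s, u₂, s)], fun _ => t, ?_, fun _ => ht, ?_⟩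
  · intro i j hij
    exact absurd (Subsingleton.elim i j ▸ hij) (lt_irrefl _)
  · intro f hf
    have h1 := hu (g f) (Finset.mem_union_left _ (Finset.mem_image_of_mem _ hf))
    have h2 := hu (h f) (Finset.mem_union_right _ (Finset.mem_image_of_mem _ hf))
    simp only [hg, hh] at h1 h2
    simp only [List.ofFn_succ, List.ofFn_zero, List.foldr, Set.mem_setOf_eq,
      Matrix.cons_val_zero, Matrix.cons_val_one, Matrix.head_cons, Fin.castSucc,
      Fin.last, Prod.mk_mul_mk, Prod.fst_mul, Prod.snd_mul]
    constructor
    · simp only [mul_assoc] at h1 ⊢; exact h1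
    · simp only [mul_assoc] at h2 ⊢; exact h2
end
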